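/- Let Y, Z, R be real-valued random variables on a probability space with Y, Z, R all square-integrable, and let Z' be a random variable that has the same distribution as Z and is independent of the triple (Y, Z, R). Then the expected change in quadratic loss when Z is replaced by the independent copy Z' satisfies E[(Y - (Z' + R))^2] - E[(Y - (Z + R))^2] = 2*(cov(Y, Z) - cov(R, Z)), where cov denotes covariance. -/

import Mathlib

open MeasureTheory ProbabilityTheory

/-- Covariance of two real-valued random variables w.r.t. a measure `μ`. -/
noncomputable def cov {Ω : Type*} [MeasurableSpace Ω] (μ : Measure Ω) (X Y : Ω → ℝ) : ℝ :=
  ∫ ω, (X ω - ∫ ω', X ω' ∂μ) * (Y ω - ∫ ω', Y ω' ∂μ) ∂μ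

lemma l2_integrable_mul {Ω : Type*} [MeasurableSpace Ω] {μ : Measure Ω} {f g : Ω → ℝ}
    (hf : MemLp f 2 μ) (hg : MemLp g 2 μ) : Integrable (fun ω => f ω * g ω) μ := by
  have h : MemLp (f • g) 1 μ := MemLp.smul hg hf
  exact memLp_one_iff_integrable.mp h

lemma cov_eq_sub {Ω : Type*} [MeasurableSpace Ω] (μ : Measure Ω) [IsProbabilityMeasure μ]
    (f g : Ω → ℝ) (hf : MemLp f 2 μ) (hg : MemLp g 2 μ) :
    cov μ f g = (∫ ω, f ω * g ω ∂μ) - (∫ ω, f ω ∂μ) * (∫ ω, g ω ∂μ) := by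
  have h1 : Integrable (fun ω => f ω * g ω) μ := l2_integrable_mul hf hg
  have h2 : Integrable f μ := hf.integrable one_le_two
  have h3 : Integrable g μ := hg.integrable one_le_two
  set a := ∫ ω, f ω ∂μ with ha
  set b := ∫ ω, g ω ∂μ with hb
  have hexp : ∀ ω, (f ω - a) * (g ω - b) = f ω * g ω - a * g ω - b * f ω + a * b := by
    intro ω; ring
  unfold cov
  rw [← ha, ← hb]
  simp_rw [hexp]
  have hA : Integrable (fun ω => f ω * g ω - a * g ω) μ := h1.sub (h3.const_mul a)
  have hB : Integrable (fun ω => f ω * g ω - a * g ω - b * f ω) μ := hA.sub (h2.const_mul b)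
  rw [integral_add hB (integrable_const _),
    integral_sub hA (h2.const_mul b),
    integral_sub h1 (h3.const_mul a), integral_const_mul, integral_const_mul, integral_const]
  simp [← ha, ← hb]
  ring

/-- Replacing one additive component `Z` of a model output `Z + R` by an independent,
identically distributed copy `Z'` changes the expected quadratic loss against the target `Y`
by `2 * (cov(Y, Z) - cov(R, Z))`. -/
theorem expected_loss_change_additive
    {Ω : Type*} [MeasurableSpace Ω] (μ : Measure Ω) [IsProbabilityMeasure μ]
    (Y Z R Z' : Ω → ℝ)
    (hY : MemLp Y 2 μ) (hZ : MemLp Z 2 μ) (hR : MemLp R 2 μ) (hZ' : MemLp Z' 2 μ)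
    (hid : IdentDistrib Z' Z μ μ)
    (hindep : IndepFun Z' (fun ω => (Y ω, Z ω, R ω)) μ) :
    (∫ ω, (Y ω - (Z' ω + R ω)) ^ 2 ∂μ) - (∫ ω, (Y ω - (Z ω + R ω)) ^ 2 ∂μ)
      = 2 * (cov μ Y Z - cov μ R Z) := by
  set W : Ω → ℝ := fun ω => Y ω - R ω with hWdef
  have hW : MemLp W 2 μ := hY.sub hR
  -- integrabilities
  have hWW : Integrable (fun ω => W ω * W ω) μ := l2_integrable_mul hW hW
  have hWZ' : Integrable (fun ω => W ω * Z' ω) μ := l2_integrable_mul hW hZ'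
  have hWZ : Integrable (fun ω => W ω * Z ω) μ := l2_integrable_mul hW hZ
  have hZZ : Integrable (fun ω => Z ω * Z ω) μ := l2_integrable_mul hZ hZ
  have hZ'Z' : Integrable (fun ω => Z' ω * Z' ω) μ := l2_integrable_mul hZ' hZ'
  have hYZ : Integrable (fun ω => Y ω * Z ω) μ := l2_integrable_mul hY hZ
  have hRZ : Integrable (fun ω => R ω * Z ω) μ := l2_integrable_mul hR hZ
  -- expansions of squares
  have hexp1 : ∀ (V : Ω → ℝ) (ω : Ω),
      (Y ω - (V ω + R ω)) ^ 2 = W ω * W ω - 2 * (W ω * V ω) + V ω * V ω := by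
    intro V ω; simp only [hWdef]; ring
  have hint : ∀ (V : Ω → ℝ), Integrable (fun ω => W ω * V ω) μ →
      Integrable (fun ω => V ω * V ω) μ →
      (∫ ω, (Y ω - (V ω + R ω)) ^ 2 ∂μ)
        = (∫ ω, W ω * W ω ∂μ) - 2 * (∫ ω, W ω * V ω ∂μ) + ∫ ω, V ω * V ω ∂μ := by
    intro V h1 h2
    have hC : Integrable (fun ω => W ω * W ω - 2 * (W ω * V ω)) μ := hWW.sub (h1.const_mul 2)
    simp_rw [hexp1 V]
    rw [integral_add hC h2,
      integral_sub hWW (h1.const_mul 2), integral_const_mul]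
  -- identical distribution facts
  have hEZ : (∫ ω, Z' ω ∂μ) = ∫ ω, Z ω ∂μ := hid.integral_eq
  have hEZ2 : (∫ ω, Z' ω * Z' ω ∂μ) = ∫ ω, Z ω * Z ω ∂μ :=
    (hid.comp (measurable_id.mul measurable_id)).integral_eq
  -- independence fact: E[W Z'] = E[W] E[Z']
  have hWZ'indep : IndepFun W Z' μ := by
    have : IndepFun Z' W μ :=
      hindep.comp measurable_id (measurable_fst.sub (measurable_snd.comp measurable_snd))
    exact this.symm
  have hEWZ' : (∫ ω, W ω * Z' ω ∂μ) = (∫ ω, W ω ∂μ) * (∫ ω, Z' ω ∂μ) :=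
    hWZ'indep.integral_fun_mul_eq_mul_integral hW.aestronglyMeasurable hZ'.aestronglyMeasurable
  -- linearity facts
  have hEW : (∫ ω, W ω ∂μ) = (∫ ω, Y ω ∂μ) - ∫ ω, R ω ∂μ :=
    integral_sub (hY.integrable one_le_two) (hR.integrable one_le_two)
  have hEWZ : (∫ ω, W ω * Z ω ∂μ) = (∫ ω, Y ω * Z ω ∂μ) - ∫ ω, R ω * Z ω ∂μ := by
    have : ∀ ω, W ω * Z ω = Y ω * Z ω - R ω * Z ω := by intro ω; simp [hWdef]; ring
    simp_rw [this]
    exact integral_sub hYZ hRZ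
  rw [hint Z' hWZ' hZ'Z', hint Z hWZ hZZ, cov_eq_sub μ Y Z hY hZ, cov_eq_sub μ R Z hR hZ,
    hEZ2, hEWZ', hEZ, hEW, hEWZ]
  have : (∫ ω, Z ω * Z ω ∂μ) = ∫ ω, Z ω ^ 2 ∂μ := by simp_rw [sq]
  ring
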